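/- Let v₀ > 0, Q ≥ 0, K ≥ 0, R > 0, and let N̄ : ℝ → ℝ satisfy N̄(y) ≥ 0 for all y ≥ v₀. Suppose f : (0, R) → ℝ satisfies f(z) ≥ v₀ for all z ∈ (0, R) and the identity f(z) − v₀ = (f(z) − v₀)² + (1 + v₀)·z·(Q·f(z) + N̄(f(z)) + K) for all z ∈ (0, R). Then f(z) does not tend to +∞ as z → R from the left. -/

import Mathlib

/-- the generating function of the nonlinear FD-method majorant
sequence cannot blow up at the right endpoint of its interval of convergence. -/
theorem stmt_15 (v0 Q K R : ℝ) (hv0 : 0 < v0) (hQ : 0 ≤ Q) (hK : 0 ≤ K) (hR : 0 < R)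
    (Nb : ℝ → ℝ) (hNb : ∀ y, v0 ≤ y → 0 ≤ Nb y)
    (f : ℝ → ℝ) (hf : ∀ z ∈ Set.Ioo (0:ℝ) R, v0 ≤ f z)
    (hid : ∀ z ∈ Set.Ioo (0:ℝ) R,
      f z - v0 = (f z - v0)^2 + (1 + v0) * z * (Q * f z + Nb (f z) + K)) :
    ¬ Filter.Tendsto f (nhdsWithin R (Set.Iio R)) Filter.atTop := by
  intro htend
  have hbd : ∀ z ∈ Set.Ioo (0:ℝ) R, f z ≤ v0 + 1 := by
    intro z hz
    have hfz := hf z hz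
    have hnn : 0 ≤ (1 + v0) * z * (Q * f z + Nb (f z) + K) := by
      apply mul_nonneg
      · apply mul_nonneg (by linarith) hz.1.le
      · have := hNb (f z) hfz
        have : 0 ≤ Q * f z := mul_nonneg hQ (by linarith)
        positivity
    have hle : (f z - v0)^2 ≤ f z - v0 := by
      have := hid z hz; linarith
    nlinarith [sq_nonneg (f z - v0 - 1)]
  have hev : ∀ᶠ z in nhdsWithin R (Set.Iio R), f z ≤ v0 + 1 := by
    filter_upwards [Ioo_mem_nhdsLT_of_mem (Set.mem_Ioc.mpr ⟨hR, le_refl R⟩)] with z hz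
    exact hbd z hz
  have hev2 : ∀ᶠ z in nhdsWithin R (Set.Iio R), v0 + 2 ≤ f z :=
    htend.eventually_ge_atTop (v0 + 2)
  have : ∀ᶠ z in nhdsWithin R (Set.Iio R), False := by
    filter_upwards [hev, hev2] with z h1 h2; linarith
  exact this.exists.elim (fun _ h => h)
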